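/- For all x ≥ 0, v > 0 and n ≥ 1 with x ≤ n, H_n(x,v) ≤ F(x,v), where H_n(x,v) = {(v²/(x+v²))^{x+v²}(n/(n−x))^{n−x}}^{n/(n+v²)} and F(x,v) = (v²/(x+v²))^{x+v²}·e^x. -/

import Mathlib

open Real

lemma f_mono : MonotoneOn (fun w : ℝ => w^2 - 1 - 2*(w*Real.log w)) (Set.Ici 0) := by
  apply monotoneOn_of_deriv_nonneg (convex_Ici 0)
  · exact (((continuous_pow 2).sub continuous_const).sub
      (continuous_const.mul Real.continuous_mul_log)).continuousOn
  · intro w hw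
    rw [interior_Ici] at hw
    have hw0 : (0:ℝ) < w := hw
    have h1 : HasDerivAt (fun w : ℝ => w^2 - 1 - 2*(w*Real.log w))
        (2*w^1 - 2*(Real.log w + 1)) w := by
      have hp : HasDerivAt (fun w : ℝ => w^2 - 1) ((2:ℕ)*w^1) w :=
        (hasDerivAt_pow 2 w).sub_const 1
      have hq := (Real.hasDerivAt_mul_log hw0.ne').const_mul (2:ℝ)
      simpa [Pi.sub_def] using hp.sub hq
    exact h1.differentiableAt.differentiableWithinAt
  · intro w hw
    rw [interior_Ici] at hw
    have hw0 : (0:ℝ) < w := hw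
    have h1 : HasDerivAt (fun w : ℝ => w^2 - 1 - 2*(w*Real.log w))
        (2*w^1 - 2*(Real.log w + 1)) w := by
      have hp : HasDerivAt (fun w : ℝ => w^2 - 1) ((2:ℕ)*w^1) w :=
        (hasDerivAt_pow 2 w).sub_const 1
      have hq := (Real.hasDerivAt_mul_log hw0.ne').const_mul (2:ℝ)
      simpa [Pi.sub_def] using hp.sub hq
    rw [h1.deriv]
    have := Real.log_le_sub_one_of_pos hw0
    nlinarith

lemma key_le (w : ℝ) (hw : 1 ≤ w) : 2*(w*Real.log w) ≤ w^2 - 1 := by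
  have h := f_mono (Set.mem_Ici.mpr (by norm_num : (0:ℝ) ≤ 1))
    (Set.mem_Ici.mpr (by linarith : (0:ℝ) ≤ w)) hw
  simp only [Real.log_one, one_pow, mul_zero, mul_one] at h
  linarith

lemma key_ge (w : ℝ) (hw0 : 0 ≤ w) (hw : w ≤ 1) : w^2 - 1 ≤ 2*(w*Real.log w) := by
  have h := f_mono (Set.mem_Ici.mpr hw0) (Set.mem_Ici.mpr (by norm_num : (0:ℝ) ≤ 1)) hw
  simp only [Real.log_one, one_pow, mul_zero, mul_one] at h
  linarith

lemma key_ge' (a b : ℝ) (ha : 0 < a) (hab : a ≤ b) :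
    a^2 - b^2 ≤ 2*((a*b) * Real.log (a/b)) := by
  have hb : 0 < b := lt_of_lt_of_le ha hab
  have hk := key_ge (a/b) (div_nonneg ha.le hb.le) ((div_le_one hb).mpr hab)
  have h2 := mul_le_mul_of_nonneg_left hk (sq_nonneg b)
  have e1 : b^2 * ((a/b)^2) = a^2 := by field_simp
  have e3 : b^2 * (2*((a/b)*Real.log (a/b))) = 2*((a*b)*Real.log (a/b)) := by
    field_simp
  linarith [h2, e1, e3]

lemma key_le' (a b : ℝ) (hb : 0 < b) (hab : b ≤ a) :
    2*((a*b) * Real.log (a/b)) ≤ a^2 - b^2 := by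
  have hk := key_le (a/b) ((one_le_div hb).mpr hab)
  have h2 := mul_le_mul_of_nonneg_left hk (sq_nonneg b)
  have e1 : b^2 * ((a/b)^2) = a^2 := by field_simp
  have e3 : b^2 * (2*((a/b)*Real.log (a/b))) = 2*((a*b)*Real.log (a/b)) := by
    field_simp
  linarith [h2, e1, e3]

lemma ineq1 (x n : ℝ) (hn : 0 < n) (hx : 0 ≤ x) (hxn : x ≤ n) :
    n * ((n - x) * Real.log (n / (n - x))) ≤ n*x - x^2/2 := by
  rcases eq_or_lt_of_le hxn with h | h
  · subst h
    simp only [sub_self, zero_mul, mul_zero]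
    nlinarith
  · have hnx : 0 < n - x := by linarith
    have hk := key_ge' (n - x) n hnx (by linarith)
    have hlog : Real.log (n / (n - x)) = - Real.log ((n-x)/n) := by
      rw [← Real.log_inv, inv_div]
    rw [hlog]
    nlinarith [hk]

lemma ineq2 (x v2 : ℝ) (hv2 : 0 < v2) (hx : 0 ≤ x) :
    v2 * ((x + v2) * Real.log ((x + v2)/v2)) ≤ v2*x + x^2/2 := by
  have hk := key_le' (x + v2) v2 hv2 (by linarith)
  nlinarith [hk]

lemma main_ineq (x v2 n : ℝ) (hx : 0 ≤ x) (hv2 : 0 < v2) (hn : 0 < n) (hxn : x ≤ n) :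
    n/(n+v2) * ((x+v2) * Real.log (v2/(x+v2)) + (n-x) * Real.log (n/(n-x)))
      ≤ (x+v2) * Real.log (v2/(x+v2)) + x := by
  have hs : 0 < x + v2 := by linarith
  have hnv : 0 < n + v2 := by linarith
  have hflip : Real.log (v2/(x+v2)) = - Real.log ((x+v2)/v2) := by
    rw [← Real.log_inv, inv_div]
  have h1 := ineq1 x n hn hx hxn
  have h2 := ineq2 x v2 hv2 hx
  rw [div_mul_eq_mul_div, div_le_iff₀ hnv, hflip]
  nlinarith [h1, h2]

theorem H_le_F (x v : ℝ) (hx : 0 ≤ x) (hv : 0 < v) (n : ℕ) (hn : 1 ≤ n) (hxn : x ≤ (n:ℝ)) :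
    ((v^2/(x+v^2)) ^ (x+v^2) * ((n:ℝ)/((n:ℝ)-x)) ^ ((n:ℝ)-x)) ^ ((n:ℝ)/((n:ℝ)+v^2))
      ≤ (v^2/(x+v^2)) ^ (x+v^2) * Real.exp x := by
  have hv2 : 0 < v^2 := by positivity
  have hs : 0 < x + v^2 := by linarith
  have hn0 : (0:ℝ) < n := by exact_mod_cast hn
  have hA : 0 < (v^2/(x+v^2)) ^ (x+v^2) := Real.rpow_pos_of_pos (div_pos hv2 hs) _
  have hB : 0 < ((n:ℝ)/((n:ℝ)-x)) ^ ((n:ℝ)-x) := by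
    rcases eq_or_lt_of_le hxn with h | h
    · rw [← h, sub_self, Real.rpow_zero]; norm_num
    · exact Real.rpow_pos_of_pos (div_pos hn0 (by linarith)) _
  have hlogB : Real.log (((n:ℝ)/((n:ℝ)-x)) ^ ((n:ℝ)-x))
      = ((n:ℝ)-x) * Real.log ((n:ℝ)/((n:ℝ)-x)) := by
    rcases eq_or_lt_of_le hxn with h | h
    · rw [← h, sub_self, Real.rpow_zero, Real.log_one, zero_mul]
    · exact Real.log_rpow (div_pos hn0 (by linarith)) _
  have hAB : 0 < (v^2/(x+v^2)) ^ (x+v^2) * ((n:ℝ)/((n:ℝ)-x)) ^ ((n:ℝ)-x) := mul_pos hA hB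
  have hL : 0 < ((v^2/(x+v^2)) ^ (x+v^2) * ((n:ℝ)/((n:ℝ)-x)) ^ ((n:ℝ)-x)) ^ ((n:ℝ)/((n:ℝ)+v^2)) :=
    Real.rpow_pos_of_pos hAB _
  have hR : 0 < (v^2/(x+v^2)) ^ (x+v^2) * Real.exp x := mul_pos hA (Real.exp_pos x)
  rw [← Real.log_le_log_iff hL hR, Real.log_rpow hAB, Real.log_mul hA.ne' hB.ne',
    Real.log_mul hA.ne' (Real.exp_pos x).ne', Real.log_exp,
    Real.log_rpow (div_pos hv2 hs), hlogB]
  exact main_ineq x (v^2) (n:ℝ) hx hv2 hn0 hxn
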